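/- Suppose point sets A and B are geometrically separated: d(A,B) ≥ max{diam(A), diam(B)}, where d(A,B) is the minimum distance between A and B. Let (u*, v*) ∈ A × B minimize the mutual reachability distance d_m over A × B, and let (u, v) ∈ A × B be arbitrary. Then max{cd(u*), cd(u), d(u, u*)} ≤ max{cd(u), cd(v), d(u,v)}; i.e., the mutual reachability distance between u and u* (both in A) is at most the mutual reachability distance between u and v. -/
import Mathlib


/-- Mutual reachability distance. -/
def dm {X : Type*} [MetricSpace X] (cd : X → ℝ) (p q : X) : ℝ :=
  max (max (cd p) (cd q)) (dist p q)

/-- If `A` and `B` are geometrically separated (`d(A,B) ≥ max {diam A, diam B}`), `(us, vs)`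
minimizes the mutual reachability distance over `A × B`, and `(u, v) ∈ A × B` is arbitrary,
then `max {cd us, cd u, d(u, us)} ≤ max {cd u, cd v, d(u, v)}`. -/
theorem geometrically_separated_intra_le_cross {X : Type*} [MetricSpace X]
    (cd : X → ℝ) (hcd : ∀ x, 0 ≤ cd x)
    (A B : Finset X) (hA : A.Nonempty) (hB : B.Nonempty)
    (hgeo :
      max ((A ×ˢ A).sup' (hA.product hA) fun pq => dist pq.1 pq.2)
          ((B ×ˢ B).sup' (hB.product hB) fun pq => dist pq.1 pq.2) ≤
      (A ×ˢ B).inf' (hA.product hB) fun pq => dist pq.1 pq.2)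
    (us vs : X) (hus : us ∈ A) (hvs : vs ∈ B)
    (hmin : ∀ a ∈ A, ∀ b ∈ B, dm cd us vs ≤ dm cd a b)
    (u v : X) (hu : u ∈ A) (hv : v ∈ B) :
    max (max (cd us) (cd u)) (dist u us) ≤ max (max (cd u) (cd v)) (dist u v) := by
  have h1 : cd us ≤ max (max (cd u) (cd v)) (dist u v) :=
    le_trans (le_max_of_le_left (le_max_left _ _)) (hmin u hu v hv)
  have h2 : cd u ≤ max (max (cd u) (cd v)) (dist u v) :=
    le_max_of_le_left (le_max_left _ _)
  have h3 : dist u us ≤ max (max (cd u) (cd v)) (dist u v) := by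
    refine le_max_of_le_right ?_
    have hmem : (u, us) ∈ A ×ˢ A := Finset.mk_mem_product hu hus
    have hle : dist u us ≤ (A ×ˢ A).sup' (hA.product hA) fun pq => dist pq.1 pq.2 :=
      Finset.le_sup' (fun pq : X × X => dist pq.1 pq.2) hmem
    have hinf : ((A ×ˢ B).inf' (hA.product hB) fun pq => dist pq.1 pq.2) ≤ dist u v :=
      Finset.inf'_le _ (Finset.mk_mem_product hu hv)
    exact le_trans hle (le_trans (le_trans (le_max_left _ _) hgeo) hinf)
  exact max_le (max_le h1 h2) h3
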